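/- For the choice f(t,s) = t·s/(t+s), the mean E_n of μ_n satisfies E_n ≥ 1.43·(5/2)ⁿ for every n ≥ 0. -/

import Mathlib

open MeasureTheory Filter

/-- The recursively defined sequence of measures: `μ₀ = (δ₁ + δ₂)/2` and `μ_{n+1}` is the
pushforward of `μ_n ⊗ μ_n ⊗ μ_n ⊗ μ_n` under `(a,b,c,d) ↦ a + b + f c d`. -/
noncomputable def mu (f : ℝ → ℝ → ℝ) : ℕ → Measure ℝ
  | 0 => (2 : ENNReal)⁻¹ • Measure.dirac 1 + (2 : ENNReal)⁻¹ • Measure.dirac 2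
  | n + 1 =>
      Measure.map (fun p : ℝ × ℝ × ℝ × ℝ => p.1 + p.2.1 + f p.2.2.1 p.2.2.2)
        ((mu f n).prod ((mu f n).prod ((mu f n).prod (mu f n))))

/-- The mean of `μ_n`. -/
noncomputable def En (f : ℝ → ℝ → ℝ) (n : ℕ) : ℝ := ∫ x, x ∂(mu f n)

open Set

set_option maxHeartbeats 1000000

/-! ### Pointwise algebraic lemmas -/

lemma P1 {a c d : ℝ} (ha : 0 < a) (hc : c ∈ Icc a (2*a)) (hd : d ∈ Icc a (2*a)) :
    c * d / (c + d) ∈ Icc (a/2) a := by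
  obtain ⟨hc1, hc2⟩ := hc; obtain ⟨hd1, hd2⟩ := hd
  have hcd : 0 < c + d := by linarith
  constructor
  · rw [le_div_iff₀ hcd]; nlinarith
  · rw [div_le_iff₀ hcd]; nlinarith

lemma P2 {a c d : ℝ} (ha : 0 < a) (hc : c ∈ Icc a (2*a)) (hd : d ∈ Icc a (2*a)) :
    (c + d) / 4 - (c - d)^2 / (8*a) ≤ c * d / (c + d) := by
  obtain ⟨hc1, hc2⟩ := hc; obtain ⟨hd1, hd2⟩ := hd
  have hcd : 0 < c + d := by linarith
  have h1 : c * d / (c+d) = (c+d)/4 - (c-d)^2/(4*(c+d)) := by field_simp; ring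
  rw [h1]
  have h2 : (c-d)^2/(4*(c+d)) ≤ (c-d)^2/(8*a) := by
    apply div_le_div_of_nonneg_left (by positivity) (by positivity) (by linarith)
  linarith

lemma P3a {a c c' d : ℝ} (ha : 0 < a) (hc : c ∈ Icc a (2*a)) (hc' : c' ∈ Icc a (2*a))
    (hd : d ∈ Icc a (2*a)) :
    (c * d / (c + d) - c' * d / (c' + d))^2 ≤ (16/81) * (c - c')^2 := by
  obtain ⟨hc1, hc2⟩ := hc; obtain ⟨hc1', hc2'⟩ := hc'; obtain ⟨hd1, hd2⟩ := hd
  have hX : 0 < c + d := by linarith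
  have hY : 0 < c' + d := by linarith
  have key : c * d / (c + d) - c' * d / (c' + d) = d^2 * (c - c') / ((c+d)*(c'+d)) := by
    field_simp; ring
  rw [key, div_pow, div_le_iff₀ (by positivity)]
  have hd0 : (0:ℝ) ≤ d := by linarith
  have h3 : (9/4) * d^2 ≤ (c+d)*(c'+d) := by nlinarith
  have h4 : ((9/4) * d^2)^2 ≤ ((c+d)*(c'+d))^2 := by
    apply pow_le_pow_left₀ (by positivity) h3
  nlinarith [mul_le_mul_of_nonneg_left h4 (sq_nonneg (c - c'))]

lemma P3 {a c d c' d' : ℝ} (ha : 0 < a) (hc : c ∈ Icc a (2*a)) (hd : d ∈ Icc a (2*a))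
    (hc' : c' ∈ Icc a (2*a)) (hd' : d' ∈ Icc a (2*a)) :
    (c * d / (c + d) - c' * d' / (c' + d'))^2 ≤ (32/81) * ((c - c')^2 + (d - d')^2) := by
  have h1 := P3a ha hc hc' hd
  have h2' : (c' * d / (c' + d) - c' * d' / (c' + d'))^2 ≤ (16/81) * (d - d')^2 := by
    have := P3a ha hd hd' hc'
    calc (c' * d / (c' + d) - c' * d' / (c' + d'))^2
        = (d * c' / (d + c') - d' * c' / (d' + c'))^2 := by rw [mul_comm c' d, mul_comm c' d', add_comm c' d, add_comm c' d']
      _ ≤ (16/81) * (d - d')^2 := this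
  have key : c * d / (c + d) - c' * d' / (c' + d') =
      (c * d / (c + d) - c' * d / (c' + d)) + (c' * d / (c' + d) - c' * d' / (c' + d')) := by ring
  rw [key]
  nlinarith [sq_nonneg ((c * d / (c + d) - c' * d / (c' + d)) - (c' * d / (c' + d) - c' * d' / (c' + d')))]

/-! ### Generic integral helpers -/

lemma int_fst {X Y : Type*} [MeasurableSpace X] [MeasurableSpace Y] (μ : Measure X) (ν : Measure Y)
    [SFinite ν] [IsProbabilityMeasure ν] [SFinite μ] (g : X → ℝ) :
    ∫ p, g p.1 ∂(μ.prod ν) = ∫ x, g x ∂μ := by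
  have := MeasureTheory.integral_prod_mul (μ := μ) (ν := ν) g (fun _ => (1:ℝ)); simpa using this

lemma int_snd {X Y : Type*} [MeasurableSpace X] [MeasurableSpace Y] (μ : Measure X) (ν : Measure Y)
    [SFinite ν] [IsProbabilityMeasure μ] [SFinite μ] (g : Y → ℝ) :
    ∫ p, g p.2 ∂(μ.prod ν) = ∫ y, g y ∂ν := by
  have := MeasureTheory.integral_prod_mul (μ := μ) (ν := ν) (fun _ => (1:ℝ)) g; simpa using this

lemma int_bdd {X : Type*} [MeasurableSpace X] {μ : Measure X} [IsFiniteMeasure μ] {g : X → ℝ}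
    (hm : AEStronglyMeasurable g μ) {C : ℝ} (hb : ∀ᵐ x ∂μ, |g x| ≤ C) : Integrable g μ :=
  Integrable.mono' (integrable_const C) hm (by simpa [Real.norm_eq_abs] using hb)

lemma ae_prod {X Y : Type*} [MeasurableSpace X] [MeasurableSpace Y] {μ : Measure X}
    {ν : Measure Y} [SFinite ν] {s : Set X} {t : Set Y}
    (hs : MeasurableSet s) (ht : MeasurableSet t)
    (hμ : ∀ᵐ x ∂μ, x ∈ s) (hν : ∀ᵐ y ∂ν, y ∈ t) :
    ∀ᵐ p ∂(μ.prod ν), p.1 ∈ s ∧ p.2 ∈ t := by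
  rw [Measure.ae_prod_iff_ae_ae (p := fun p : X × Y => p.1 ∈ s ∧ p.2 ∈ t) (hs.prod ht)]
  filter_upwards [hμ] with x hx
  filter_upwards [hν] with y hy
  exact ⟨hx, hy⟩

section Generic
variable {α : Type*} [MeasurableSpace α] {m : Measure α}

lemma intg3sub (u v w : α → ℝ) (hu : Integrable u m) (hv : Integrable v m)
    (hw : Integrable w m) :
    ∫ x, (u x + v x - 2 * w x) ∂m = ∫ x, u x ∂m + ∫ x, v x ∂m - 2 * ∫ x, w x ∂m := by
  rw [integral_sub (f := fun x => u x + v x) (g := fun x => 2 * w x) (hu.add hv) (hw.const_mul 2),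
    integral_add (f := fun x => u x) (g := fun x => v x) hu hv,
    integral_const_mul 2]

lemma intg_sq_add3 (u v w : α → ℝ)
    (hu2 : Integrable (fun x => (u x)^2) m) (hv2 : Integrable (fun x => (v x)^2) m)
    (hw2 : Integrable (fun x => (w x)^2) m)
    (huv : Integrable (fun x => u x * v x) m) (huw : Integrable (fun x => u x * w x) m)
    (hvw : Integrable (fun x => v x * w x) m) :
    ∫ x, (u x + v x + w x)^2 ∂m
      = ∫ x, (u x)^2 ∂m + ∫ x, (v x)^2 ∂m + ∫ x, (w x)^2 ∂m
        + 2 * ∫ x, u x * v x ∂m + 2 * ∫ x, u x * w x ∂m + 2 * ∫ x, v x * w x ∂m := by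
  have e : (fun x => (u x + v x + w x)^2)
      = fun x => (u x)^2 + (v x)^2 + (w x)^2 + 2 * (u x * v x) + 2 * (u x * w x)
        + 2 * (v x * w x) := funext fun x => by ring
  rw [e,
    integral_add (f := fun x => (u x)^2 + (v x)^2 + (w x)^2 + 2 * (u x * v x) + 2 * (u x * w x))
      (g := fun x => 2 * (v x * w x))
      (((((hu2.add hv2).add hw2)).add (huv.const_mul 2)).add (huw.const_mul 2))
      (hvw.const_mul 2),
    integral_add (f := fun x => (u x)^2 + (v x)^2 + (w x)^2 + 2 * (u x * v x))
      (g := fun x => 2 * (u x * w x))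
      ((((hu2.add hv2).add hw2)).add (huv.const_mul 2)) (huw.const_mul 2),
    integral_add (f := fun x => (u x)^2 + (v x)^2 + (w x)^2)
      (g := fun x => 2 * (u x * v x))
      (((hu2.add hv2).add hw2)) (huv.const_mul 2),
    integral_add (f := fun x => (u x)^2 + (v x)^2) (g := fun x => (w x)^2) (hu2.add hv2) hw2,
    integral_add (f := fun x => (u x)^2) (g := fun x => (v x)^2) hu2 hv2,
    integral_const_mul 2, integral_const_mul 2, integral_const_mul 2]

lemma intg_sub_sq (u v : α → ℝ)
    (hu2 : Integrable (fun x => (u x)^2) m) (hv2 : Integrable (fun x => (v x)^2) m)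
    (huv : Integrable (fun x => u x * v x) m) :
    ∫ x, (u x - v x)^2 ∂m
      = ∫ x, (u x)^2 ∂m + ∫ x, (v x)^2 ∂m - 2 * ∫ x, u x * v x ∂m := by
  have e : (fun x => (u x - v x)^2)
      = fun x => (u x)^2 + (v x)^2 - 2 * (u x * v x) := funext fun x => by ring
  rw [e]
  exact intg3sub _ _ _ hu2 hv2 huv

end Generic

/-! ### Measurability -/

lemma rf_meas : Measurable (fun q : ℝ × ℝ => q.1 * q.2 / (q.1 + q.2)) :=
  (measurable_fst.mul measurable_snd).div (measurable_fst.add measurable_snd)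

lemma F_meas : Measurable (fun p : ℝ × ℝ × ℝ × ℝ => p.1 + p.2.1 + p.2.2.1 * p.2.2.2 / (p.2.2.1 + p.2.2.2)) := by
  have h1 : Measurable (fun p : ℝ × ℝ × ℝ × ℝ => p.2.2) := measurable_snd.comp measurable_snd
  exact (measurable_fst.add (measurable_fst.comp measurable_snd)).add (rf_meas.comp h1)

lemma mu_prob : ∀ n, IsProbabilityMeasure (mu (fun t s => t * s / (t + s)) n) := by
  intro n
  induction n with
  | zero =>
      constructor
      rw [mu]
      simp
      rw [ENNReal.inv_two_add_inv_two]
  | succ n ih =>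
      rw [mu]
      haveI := ih
      exact Measure.isProbabilityMeasure_map F_meas.aemeasurable

/-! ### The one-step estimates -/

section Step
variable {μ : Measure ℝ} [IsProbabilityMeasure μ] {a : ℝ}

lemma supp4 (ha : 0 < a) (hsupp : ∀ᵐ x ∂μ, x ∈ Icc a (2*a)) :
    ∀ᵐ p ∂(μ.prod (μ.prod (μ.prod μ))), p.1 ∈ Icc a (2*a) ∧ p.2.1 ∈ Icc a (2*a)
      ∧ p.2.2.1 ∈ Icc a (2*a) ∧ p.2.2.2 ∈ Icc a (2*a) := by
  have h2 : ∀ᵐ q ∂(μ.prod μ), q ∈ (Icc a (2*a)) ×ˢ (Icc a (2*a)) :=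
    ae_prod measurableSet_Icc measurableSet_Icc hsupp hsupp
  have h3 : ∀ᵐ y ∂(μ.prod (μ.prod μ)), y ∈ (Icc a (2*a)) ×ˢ ((Icc a (2*a)) ×ˢ (Icc a (2*a))) :=
    ae_prod measurableSet_Icc (measurableSet_Icc.prod measurableSet_Icc) hsupp h2
  have h4 := ae_prod (μ := μ) measurableSet_Icc
    (measurableSet_Icc.prod (measurableSet_Icc.prod measurableSet_Icc)) hsupp h3
  filter_upwards [h4] with p hp
  exact ⟨hp.1, hp.2.1, hp.2.2.1, hp.2.2.2⟩

lemma supp2 (hsupp : ∀ᵐ x ∂μ, x ∈ Icc a (2*a)) :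
    ∀ᵐ q ∂(μ.prod μ), q.1 ∈ Icc a (2*a) ∧ q.2 ∈ Icc a (2*a) :=
  ae_prod measurableSet_Icc measurableSet_Icc hsupp hsupp

lemma suppSigma (hsupp : ∀ᵐ x ∂μ, x ∈ Icc a (2*a)) :
    ∀ᵐ z ∂((μ.prod μ).prod (μ.prod μ)), (z.1.1 ∈ Icc a (2*a) ∧ z.1.2 ∈ Icc a (2*a))
      ∧ (z.2.1 ∈ Icc a (2*a) ∧ z.2.2 ∈ Icc a (2*a)) := by
  have h2 : ∀ᵐ q ∂(μ.prod μ), q ∈ (Icc a (2*a)) ×ˢ (Icc a (2*a)) :=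
    ae_prod measurableSet_Icc measurableSet_Icc hsupp hsupp
  exact ae_prod (measurableSet_Icc.prod measurableSet_Icc)
    (measurableSet_Icc.prod measurableSet_Icc) h2 h2

lemma intPi (ha : 0 < a) (hsupp : ∀ᵐ x ∂μ, x ∈ Icc a (2*a)) :
    Integrable (fun p : ℝ × ℝ × ℝ × ℝ => p.1) (μ.prod (μ.prod (μ.prod μ)))
    ∧ Integrable (fun p : ℝ × ℝ × ℝ × ℝ => p.2.1) (μ.prod (μ.prod (μ.prod μ)))
    ∧ Integrable (fun p : ℝ × ℝ × ℝ × ℝ => p.2.2.1 * p.2.2.2 / (p.2.2.1 + p.2.2.2)) (μ.prod (μ.prod (μ.prod μ))) := by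
  have hs4 := supp4 ha hsupp
  refine ⟨int_bdd measurable_fst.aestronglyMeasurable (C := 2*a) ?_,
    int_bdd (measurable_fst.comp measurable_snd).aestronglyMeasurable (C := 2*a) ?_,
    int_bdd (rf_meas.comp (measurable_snd.comp measurable_snd)).aestronglyMeasurable (C := a) ?_⟩
  · filter_upwards [hs4] with p hp
    rw [abs_le]; exact ⟨by linarith [hp.1.1], hp.1.2⟩
  · filter_upwards [hs4] with p hp
    rw [abs_le]; exact ⟨by linarith [hp.2.1.1], hp.2.1.2⟩
  · filter_upwards [hs4] with p hp
    have := P1 ha hp.2.2.1 hp.2.2.2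
    rw [abs_le]; exact ⟨by linarith [this.1], this.2⟩

lemma mean_eq (ha : 0 < a) (hsupp : ∀ᵐ x ∂μ, x ∈ Icc a (2*a)) :
    ∫ x, x ∂(Measure.map (fun p : ℝ × ℝ × ℝ × ℝ => p.1 + p.2.1 + p.2.2.1 * p.2.2.2 / (p.2.2.1 + p.2.2.2))
        (μ.prod (μ.prod (μ.prod μ))))
      = 2 * (∫ x, x ∂μ) + ∫ q, q.1 * q.2 / (q.1 + q.2) ∂(μ.prod μ) := by
  obtain ⟨i1, i2, i3⟩ := intPi ha hsupp
  rw [integral_map (f := fun x : ℝ => x) F_meas.aemeasurable measurable_id.aestronglyMeasurable]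
  rw [integral_add (f := fun p : ℝ × ℝ × ℝ × ℝ => p.1 + p.2.1)
      (g := fun p : ℝ × ℝ × ℝ × ℝ => p.2.2.1 * p.2.2.2 / (p.2.2.1 + p.2.2.2)) (i1.add i2) i3,
    integral_add (f := fun p : ℝ × ℝ × ℝ × ℝ => p.1) (g := fun p : ℝ × ℝ × ℝ × ℝ => p.2.1) i1 i2]
  have m1 : ∫ p : ℝ × ℝ × ℝ × ℝ, p.1 ∂(μ.prod (μ.prod (μ.prod μ))) = ∫ x, x ∂μ :=
    int_fst μ _ (fun x => x)
  have m2 : ∫ p : ℝ × ℝ × ℝ × ℝ, p.2.1 ∂(μ.prod (μ.prod (μ.prod μ))) = ∫ x, x ∂μ := by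
    rw [int_snd μ _ (fun y : ℝ × ℝ × ℝ => y.1)]
    exact int_fst μ _ (fun x => x)
  have m3 : ∫ p : ℝ × ℝ × ℝ × ℝ, p.2.2.1 * p.2.2.2 / (p.2.2.1 + p.2.2.2) ∂(μ.prod (μ.prod (μ.prod μ)))
      = ∫ q, q.1 * q.2 / (q.1 + q.2) ∂(μ.prod μ) := by
    rw [int_snd μ _ (fun y : ℝ × ℝ × ℝ => y.2.1 * y.2.2 / (y.2.1 + y.2.2))]
    exact int_snd μ _ (fun q : ℝ × ℝ => q.1 * q.2 / (q.1 + q.2))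
  rw [m1, m2, m3]; ring

lemma marg_nu (hsupp : ∀ᵐ x ∂μ, x ∈ Icc a (2*a)) (E M : ℝ) (hE : ∫ x, x ∂μ = E)
    (hM : ∫ x, x^2 ∂μ = M) :
    (∫ q : ℝ × ℝ, q.1 ∂(μ.prod μ) = E) ∧ (∫ q : ℝ × ℝ, q.2 ∂(μ.prod μ) = E)
    ∧ (∫ q : ℝ × ℝ, q.1^2 ∂(μ.prod μ) = M) ∧ (∫ q : ℝ × ℝ, q.2^2 ∂(μ.prod μ) = M)
    ∧ (∫ q : ℝ × ℝ, q.1 * q.2 ∂(μ.prod μ) = E * E) := by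
  refine ⟨?_, ?_, ?_, ?_, ?_⟩
  · rw [int_fst μ μ (fun x => x)]; exact hE
  · rw [int_snd μ μ (fun x => x)]; exact hE
  · rw [int_fst μ μ (fun x => x^2)]; exact hM
  · rw [int_snd μ μ (fun x => x^2)]; exact hM
  · have := MeasureTheory.integral_prod_mul (μ := μ) (ν := μ) (fun x : ℝ => x) (fun x : ℝ => x)
    rw [hE] at this; exact this

lemma int_nu (ha : 0 < a) (hsupp : ∀ᵐ x ∂μ, x ∈ Icc a (2*a)) :
    Integrable (fun q : ℝ × ℝ => q.1) (μ.prod μ)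
    ∧ Integrable (fun q : ℝ × ℝ => q.2) (μ.prod μ)
    ∧ Integrable (fun q : ℝ × ℝ => q.1^2) (μ.prod μ)
    ∧ Integrable (fun q : ℝ × ℝ => q.2^2) (μ.prod μ)
    ∧ Integrable (fun q : ℝ × ℝ => q.1 * q.2) (μ.prod μ)
    ∧ Integrable (fun q : ℝ × ℝ => q.1 * q.2 / (q.1 + q.2)) (μ.prod μ)
    ∧ Integrable (fun q : ℝ × ℝ => (q.1 - q.2)^2) (μ.prod μ)
    ∧ Integrable (fun q : ℝ × ℝ => (q.1 + q.2)/4 - (q.1 - q.2)^2/(8*a)) (μ.prod μ) := by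
  have hs2 := supp2 hsupp
  have hb : ∀ q : ℝ × ℝ, q.1 ∈ Icc a (2*a) → q.2 ∈ Icc a (2*a) →
      |q.1| ≤ 2*a ∧ |q.2| ≤ 2*a := by
    intro q h1 h2
    constructor <;> rw [abs_le] <;> constructor <;> linarith [h1.1, h1.2, h2.1, h2.2]
  refine ⟨int_bdd measurable_fst.aestronglyMeasurable (C := 2*a) ?_,
    int_bdd measurable_snd.aestronglyMeasurable (C := 2*a) ?_,
    int_bdd (measurable_fst.pow_const 2).aestronglyMeasurable (C := 4*a^2) ?_,
    int_bdd (measurable_snd.pow_const 2).aestronglyMeasurable (C := 4*a^2) ?_,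
    int_bdd (measurable_fst.mul measurable_snd).aestronglyMeasurable (C := 4*a^2) ?_,
    int_bdd rf_meas.aestronglyMeasurable (C := a) ?_,
    int_bdd ((measurable_fst.sub measurable_snd).pow_const 2).aestronglyMeasurable (C := 4*a^2) ?_,
    int_bdd (((measurable_fst.add measurable_snd).div_const 4).sub
      (((measurable_fst.sub measurable_snd).pow_const 2).div_const (8*a))).aestronglyMeasurable
      (C := 2*a) ?_⟩
  · filter_upwards [hs2] with q hq; exact (hb q hq.1 hq.2).1
  · filter_upwards [hs2] with q hq; exact (hb q hq.1 hq.2).2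
  · filter_upwards [hs2] with q hq
    rw [abs_le]; constructor <;> nlinarith [hq.1.1, hq.1.2, ha]
  · filter_upwards [hs2] with q hq
    rw [abs_le]; constructor <;> nlinarith [hq.2.1, hq.2.2, ha]
  · filter_upwards [hs2] with q hq
    rw [abs_le]; constructor <;> nlinarith [hq.1.1, hq.1.2, hq.2.1, hq.2.2, ha]
  · filter_upwards [hs2] with q hq
    have := P1 ha hq.1 hq.2
    rw [abs_le]; exact ⟨by linarith [this.1], this.2⟩
  · filter_upwards [hs2] with q hq
    rw [abs_le]; constructor <;> nlinarith [hq.1.1, hq.1.2, hq.2.1, hq.2.2, ha]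
  · filter_upwards [hs2] with q hq
    obtain ⟨⟨h11, h12⟩, h21, h22⟩ := hq
    have h8a : 0 < 8*a := by linarith
    have hds : (q.1 - q.2)^2 ≤ a^2 := by nlinarith
    have h0 : 0 ≤ (q.1 - q.2)^2 := sq_nonneg _
    have hdd : 0 ≤ (q.1 - q.2)^2/(8*a) := by positivity
    have hdu : (q.1 - q.2)^2/(8*a) ≤ a/8 := by
      rw [div_le_iff₀ h8a]; nlinarith
    rw [abs_le]; constructor <;> [nlinarith; nlinarith]

lemma I_lb (ha : 0 < a) (hsupp : ∀ᵐ x ∂μ, x ∈ Icc a (2*a)) :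
    (∫ x, x ∂μ)/2 - ((∫ x, x^2 ∂μ) - (∫ x, x ∂μ)^2)/(4*a)
      ≤ ∫ q, q.1 * q.2 / (q.1 + q.2) ∂(μ.prod μ) := by
  obtain ⟨i1, i2, i1s, i2s, ic, irf, ids, ilb⟩ := int_nu ha hsupp
  obtain ⟨m1, m2, m1s, m2s, mc⟩ := marg_nu hsupp (∫ x, x ∂μ) (∫ x, x^2 ∂μ) rfl rfl
  set E := ∫ x, x ∂μ
  set M := ∫ x, x^2 ∂μ
  have hmono : ∫ q, ((q.1 + q.2)/4 - (q.1 - q.2)^2/(8*a)) ∂(μ.prod μ)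
      ≤ ∫ q, q.1 * q.2 / (q.1 + q.2) ∂(μ.prod μ) := by
    apply integral_mono_ae ilb irf
    filter_upwards [supp2 hsupp] with q hq
    exact P2 ha hq.1 hq.2
  have hcomp : ∫ q, ((q.1 + q.2)/4 - (q.1 - q.2)^2/(8*a)) ∂(μ.prod μ)
      = (E + E)/4 - (M + M - 2*(E*E))/(8*a) := by
    rw [integral_sub (f := fun q : ℝ × ℝ => (q.1 + q.2)/4)
      (g := fun q : ℝ × ℝ => (q.1 - q.2)^2/(8*a)) ((i1.add i2).div_const 4) (ids.div_const (8*a)),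
      integral_div, integral_div,
      integral_add (f := fun q : ℝ × ℝ => q.1) (g := fun q : ℝ × ℝ => q.2) i1 i2,
      intg_sub_sq (fun q : ℝ × ℝ => q.1) (fun q : ℝ × ℝ => q.2) i1s i2s ic,
      m1, m2, m1s, m2s, mc]
  rw [hcomp] at hmono
  have heq : E/2 - (M - E^2)/(4*a) = (E + E)/4 - (M + M - 2*(E*E))/(8*a) := by
    field_simp; ring
  linarith [hmono, heq.ge, heq.le]

lemma JI_bound (ha : 0 < a) (hsupp : ∀ᵐ x ∂μ, x ∈ Icc a (2*a)) :
    (∫ q : ℝ × ℝ, (q.1 * q.2 / (q.1 + q.2))^2 ∂(μ.prod μ))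
      - (∫ q : ℝ × ℝ, q.1 * q.2 / (q.1 + q.2) ∂(μ.prod μ))^2
      ≤ (64/81) * ((∫ x, x^2 ∂μ) - (∫ x, x ∂μ)^2) := by
  obtain ⟨m1, m2, m1s, m2s, mc⟩ := marg_nu hsupp (∫ x, x ∂μ) (∫ x, x^2 ∂μ) rfl rfl
  set E := ∫ x, x ∂μ with hE
  set M := ∫ x, x^2 ∂μ with hM
  set I := ∫ q : ℝ × ℝ, q.1 * q.2 / (q.1 + q.2) ∂(μ.prod μ) with hI
  set J := ∫ q : ℝ × ℝ, (q.1 * q.2 / (q.1 + q.2))^2 ∂(μ.prod μ) with hJ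
  have hsσ := suppSigma hsupp
  -- integrability over sigma
  have mf1 : Measurable (fun z : (ℝ × ℝ) × (ℝ × ℝ) => z.1.1 * z.1.2 / (z.1.1 + z.1.2)) :=
    rf_meas.comp measurable_fst
  have mf2 : Measurable (fun z : (ℝ × ℝ) × (ℝ × ℝ) => z.2.1 * z.2.2 / (z.2.1 + z.2.2)) :=
    rf_meas.comp measurable_snd
  have hrfb : ∀ (c d : ℝ), c ∈ Icc a (2*a) → d ∈ Icc a (2*a) →
      a/2 ≤ c * d / (c + d) ∧ c * d / (c + d) ≤ a := fun c d hc hd => (P1 ha hc hd : _)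
  have iA : Integrable (fun z : (ℝ × ℝ) × (ℝ × ℝ) => (z.1.1 * z.1.2 / (z.1.1 + z.1.2))^2)
      ((μ.prod μ).prod (μ.prod μ)) := by
    apply int_bdd (mf1.pow_const 2).aestronglyMeasurable (C := a^2)
    filter_upwards [hsσ] with z hz
    obtain ⟨h1, h2⟩ := hrfb _ _ hz.1.1 hz.1.2
    rw [abs_le]; constructor <;> nlinarith
  have iB : Integrable (fun z : (ℝ × ℝ) × (ℝ × ℝ) => (z.2.1 * z.2.2 / (z.2.1 + z.2.2))^2)
      ((μ.prod μ).prod (μ.prod μ)) := by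
    apply int_bdd (mf2.pow_const 2).aestronglyMeasurable (C := a^2)
    filter_upwards [hsσ] with z hz
    obtain ⟨h1, h2⟩ := hrfb _ _ hz.2.1 hz.2.2
    rw [abs_le]; constructor <;> nlinarith
  have iAB : Integrable (fun z : (ℝ × ℝ) × (ℝ × ℝ) =>
      (z.1.1 * z.1.2 / (z.1.1 + z.1.2)) * (z.2.1 * z.2.2 / (z.2.1 + z.2.2)))
      ((μ.prod μ).prod (μ.prod μ)) := by
    apply int_bdd (mf1.mul mf2).aestronglyMeasurable (C := a^2)
    filter_upwards [hsσ] with z hz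
    obtain ⟨h1, h2⟩ := hrfb _ _ hz.1.1 hz.1.2
    obtain ⟨h3, h4⟩ := hrfb _ _ hz.2.1 hz.2.2
    simp only [Pi.mul_apply, Pi.sub_apply]; rw [abs_le]; constructor <;> nlinarith
  have iKf : Integrable (fun z : (ℝ × ℝ) × (ℝ × ℝ) =>
      (z.1.1 * z.1.2 / (z.1.1 + z.1.2) - z.2.1 * z.2.2 / (z.2.1 + z.2.2))^2)
      ((μ.prod μ).prod (μ.prod μ)) := by
    apply int_bdd ((mf1.sub mf2).pow_const 2).aestronglyMeasurable (C := a^2)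
    filter_upwards [hsσ] with z hz
    obtain ⟨h1, h2⟩ := hrfb _ _ hz.1.1 hz.1.2
    obtain ⟨h3, h4⟩ := hrfb _ _ hz.2.1 hz.2.2
    simp only [Pi.mul_apply, Pi.sub_apply]; rw [abs_le]; constructor <;> nlinarith
  have md11 : Measurable (fun z : (ℝ × ℝ) × (ℝ × ℝ) => z.1.1) := measurable_fst.comp measurable_fst
  have md12 : Measurable (fun z : (ℝ × ℝ) × (ℝ × ℝ) => z.1.2) := measurable_snd.comp measurable_fst
  have md21 : Measurable (fun z : (ℝ × ℝ) × (ℝ × ℝ) => z.2.1) := measurable_fst.comp measurable_snd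
  have md22 : Measurable (fun z : (ℝ × ℝ) × (ℝ × ℝ) => z.2.2) := measurable_snd.comp measurable_snd
  have sqb : ∀ (u v : ℝ), u ∈ Icc a (2*a) → v ∈ Icc a (2*a) → |u * v| ≤ 4*a^2 := by
    intro u v hu hv
    rw [abs_le]; constructor <;> nlinarith [hu.1, hu.2, hv.1, hv.2]
  have sqb2 : ∀ (u : ℝ), u ∈ Icc a (2*a) → |u^2| ≤ 4*a^2 := by
    intro u hu
    rw [abs_le]; constructor <;> nlinarith [hu.1, hu.2]
  have i11s : Integrable (fun z : (ℝ × ℝ) × (ℝ × ℝ) => z.1.1^2) ((μ.prod μ).prod (μ.prod μ)) := by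
    apply int_bdd (md11.pow_const 2).aestronglyMeasurable (C := 4*a^2)
    filter_upwards [hsσ] with z hz; exact sqb2 _ hz.1.1
  have i21s : Integrable (fun z : (ℝ × ℝ) × (ℝ × ℝ) => z.2.1^2) ((μ.prod μ).prod (μ.prod μ)) := by
    apply int_bdd (md21.pow_const 2).aestronglyMeasurable (C := 4*a^2)
    filter_upwards [hsσ] with z hz; exact sqb2 _ hz.2.1
  have ix1 : Integrable (fun z : (ℝ × ℝ) × (ℝ × ℝ) => z.1.1 * z.2.1) ((μ.prod μ).prod (μ.prod μ)) := by
    apply int_bdd (md11.mul md21).aestronglyMeasurable (C := 4*a^2)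
    filter_upwards [hsσ] with z hz; exact sqb _ _ hz.1.1 hz.2.1
  have i12s : Integrable (fun z : (ℝ × ℝ) × (ℝ × ℝ) => z.1.2^2) ((μ.prod μ).prod (μ.prod μ)) := by
    apply int_bdd (md12.pow_const 2).aestronglyMeasurable (C := 4*a^2)
    filter_upwards [hsσ] with z hz; exact sqb2 _ hz.1.2
  have i22s : Integrable (fun z : (ℝ × ℝ) × (ℝ × ℝ) => z.2.2^2) ((μ.prod μ).prod (μ.prod μ)) := by
    apply int_bdd (md22.pow_const 2).aestronglyMeasurable (C := 4*a^2)
    filter_upwards [hsσ] with z hz; exact sqb2 _ hz.2.2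
  have ix2 : Integrable (fun z : (ℝ × ℝ) × (ℝ × ℝ) => z.1.2 * z.2.2) ((μ.prod μ).prod (μ.prod μ)) := by
    apply int_bdd (md12.mul md22).aestronglyMeasurable (C := 4*a^2)
    filter_upwards [hsσ] with z hz; exact sqb _ _ hz.1.2 hz.2.2
  have id1 : Integrable (fun z : (ℝ × ℝ) × (ℝ × ℝ) => (z.1.1 - z.2.1)^2) ((μ.prod μ).prod (μ.prod μ)) := by
    apply int_bdd ((md11.sub md21).pow_const 2).aestronglyMeasurable (C := 4*a^2)
    filter_upwards [hsσ] with z hz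
    simp only [Pi.sub_apply]; rw [abs_le]
    constructor <;> nlinarith [hz.1.1.1, hz.1.1.2, hz.2.1.1, hz.2.1.2]
  have id2 : Integrable (fun z : (ℝ × ℝ) × (ℝ × ℝ) => (z.1.2 - z.2.2)^2) ((μ.prod μ).prod (μ.prod μ)) := by
    apply int_bdd ((md12.sub md22).pow_const 2).aestronglyMeasurable (C := 4*a^2)
    filter_upwards [hsσ] with z hz
    simp only [Pi.sub_apply]; rw [abs_le]
    constructor <;> nlinarith [hz.1.2.1, hz.1.2.2, hz.2.2.1, hz.2.2.2]
  -- marginal values over sigma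
  have s1 : ∫ z : (ℝ × ℝ) × (ℝ × ℝ), (z.1.1 * z.1.2 / (z.1.1 + z.1.2))^2
      ∂((μ.prod μ).prod (μ.prod μ)) = J :=
    int_fst (μ.prod μ) (μ.prod μ) (fun q : ℝ × ℝ => (q.1 * q.2 / (q.1 + q.2))^2)
  have s2 : ∫ z : (ℝ × ℝ) × (ℝ × ℝ), (z.2.1 * z.2.2 / (z.2.1 + z.2.2))^2
      ∂((μ.prod μ).prod (μ.prod μ)) = J :=
    int_snd (μ.prod μ) (μ.prod μ) (fun q : ℝ × ℝ => (q.1 * q.2 / (q.1 + q.2))^2)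
  have s3 : ∫ z : (ℝ × ℝ) × (ℝ × ℝ),
      (z.1.1 * z.1.2 / (z.1.1 + z.1.2)) * (z.2.1 * z.2.2 / (z.2.1 + z.2.2))
      ∂((μ.prod μ).prod (μ.prod μ)) = I * I :=
    MeasureTheory.integral_prod_mul (fun q : ℝ × ℝ => q.1 * q.2 / (q.1 + q.2))
      (fun q : ℝ × ℝ => q.1 * q.2 / (q.1 + q.2))
  have s4 : ∫ z : (ℝ × ℝ) × (ℝ × ℝ), z.1.1^2 ∂((μ.prod μ).prod (μ.prod μ)) = M := by
    rw [int_fst (μ.prod μ) (μ.prod μ) (fun q : ℝ × ℝ => q.1^2)]; exact m1s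
  have s5 : ∫ z : (ℝ × ℝ) × (ℝ × ℝ), z.2.1^2 ∂((μ.prod μ).prod (μ.prod μ)) = M := by
    rw [int_snd (μ.prod μ) (μ.prod μ) (fun q : ℝ × ℝ => q.1^2)]; exact m1s
  have s6 : ∫ z : (ℝ × ℝ) × (ℝ × ℝ), z.1.1 * z.2.1 ∂((μ.prod μ).prod (μ.prod μ)) = E * E := by
    have := MeasureTheory.integral_prod_mul (μ := μ.prod μ) (ν := μ.prod μ)
      (fun q : ℝ × ℝ => q.1) (fun q : ℝ × ℝ => q.1)
    rw [m1] at this; exact this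
  have s7 : ∫ z : (ℝ × ℝ) × (ℝ × ℝ), z.1.2^2 ∂((μ.prod μ).prod (μ.prod μ)) = M := by
    rw [int_fst (μ.prod μ) (μ.prod μ) (fun q : ℝ × ℝ => q.2^2)]; exact m2s
  have s8 : ∫ z : (ℝ × ℝ) × (ℝ × ℝ), z.2.2^2 ∂((μ.prod μ).prod (μ.prod μ)) = M := by
    rw [int_snd (μ.prod μ) (μ.prod μ) (fun q : ℝ × ℝ => q.2^2)]; exact m2s
  have s9 : ∫ z : (ℝ × ℝ) × (ℝ × ℝ), z.1.2 * z.2.2 ∂((μ.prod μ).prod (μ.prod μ)) = E * E := by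
    have := MeasureTheory.integral_prod_mul (μ := μ.prod μ) (ν := μ.prod μ)
      (fun q : ℝ × ℝ => q.2) (fun q : ℝ × ℝ => q.2)
    rw [m2] at this; exact this
  -- K = 2J - 2I²
  have hK1 : ∫ z : (ℝ × ℝ) × (ℝ × ℝ),
      (z.1.1 * z.1.2 / (z.1.1 + z.1.2) - z.2.1 * z.2.2 / (z.2.1 + z.2.2))^2
      ∂((μ.prod μ).prod (μ.prod μ)) = J + J - 2*(I*I) := by
    rw [intg_sub_sq (fun z : (ℝ × ℝ) × (ℝ × ℝ) => z.1.1 * z.1.2 / (z.1.1 + z.1.2))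
      (fun z : (ℝ × ℝ) × (ℝ × ℝ) => z.2.1 * z.2.2 / (z.2.1 + z.2.2)) iA iB iAB, s1, s2, s3]
  -- K ≤ (32/81)(4M - 4E²)
  have hK2 : ∫ z : (ℝ × ℝ) × (ℝ × ℝ),
      (z.1.1 * z.1.2 / (z.1.1 + z.1.2) - z.2.1 * z.2.2 / (z.2.1 + z.2.2))^2
      ∂((μ.prod μ).prod (μ.prod μ))
      ≤ ∫ z : (ℝ × ℝ) × (ℝ × ℝ), (32/81) * ((z.1.1 - z.2.1)^2 + (z.1.2 - z.2.2)^2)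
      ∂((μ.prod μ).prod (μ.prod μ)) := by
    apply integral_mono_ae iKf ((id1.add id2).const_mul (32/81))
    filter_upwards [hsσ] with z hz
    exact P3 ha hz.1.1 hz.1.2 hz.2.1 hz.2.2
  have hK3 : ∫ z : (ℝ × ℝ) × (ℝ × ℝ), (32/81) * ((z.1.1 - z.2.1)^2 + (z.1.2 - z.2.2)^2)
      ∂((μ.prod μ).prod (μ.prod μ))
      = (32/81) * ((M + M - 2*(E*E)) + (M + M - 2*(E*E))) := by
    rw [integral_const_mul (32/81),
      integral_add (f := fun z : (ℝ × ℝ) × (ℝ × ℝ) => (z.1.1 - z.2.1)^2)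
        (g := fun z : (ℝ × ℝ) × (ℝ × ℝ) => (z.1.2 - z.2.2)^2) id1 id2,
      intg_sub_sq (fun z : (ℝ × ℝ) × (ℝ × ℝ) => z.1.1)
        (fun z : (ℝ × ℝ) × (ℝ × ℝ) => z.2.1) i11s i21s ix1,
      intg_sub_sq (fun z : (ℝ × ℝ) × (ℝ × ℝ) => z.1.2)
        (fun z : (ℝ × ℝ) × (ℝ × ℝ) => z.2.2) i12s i22s ix2,
      s4, s5, s6, s7, s8, s9]
  rw [hK1] at hK2
  rw [hK3] at hK2
  nlinarith [hK2]

lemma sq_eq (ha : 0 < a) (hsupp : ∀ᵐ x ∂μ, x ∈ Icc a (2*a)) :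
    ∫ x, x^2 ∂(Measure.map (fun p : ℝ × ℝ × ℝ × ℝ => p.1 + p.2.1 + p.2.2.1 * p.2.2.2 / (p.2.2.1 + p.2.2.2))
        (μ.prod (μ.prod (μ.prod μ))))
      = 2 * (∫ x, x^2 ∂μ) + (∫ q : ℝ × ℝ, (q.1 * q.2 / (q.1 + q.2))^2 ∂(μ.prod μ))
        + 2 * (∫ x, x ∂μ)^2
        + 4 * ((∫ x, x ∂μ) * (∫ q : ℝ × ℝ, q.1 * q.2 / (q.1 + q.2) ∂(μ.prod μ))) := by
  have hs4 := supp4 ha hsupp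
  have mw : Measurable (fun p : ℝ × ℝ × ℝ × ℝ => p.2.2.1 * p.2.2.2 / (p.2.2.1 + p.2.2.2)) :=
    rf_meas.comp (measurable_snd.comp measurable_snd)
  have m21 : Measurable (fun p : ℝ × ℝ × ℝ × ℝ => p.2.1) := measurable_fst.comp measurable_snd
  -- integrability of the six terms
  have sqb : ∀ (u v : ℝ), u ∈ Icc a (2*a) → v ∈ Icc (a/2) a → |u * v| ≤ 2*a^2 := by
    intro u v hu hv
    rw [abs_le]; constructor <;> nlinarith [hu.1, hu.2, hv.1, hv.2, ha]
  have iu2 : Integrable (fun p : ℝ × ℝ × ℝ × ℝ => p.1^2) (μ.prod (μ.prod (μ.prod μ))) := by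
    apply int_bdd (measurable_fst.pow_const 2).aestronglyMeasurable (C := 4*a^2)
    filter_upwards [hs4] with p hp
    rw [abs_le]; constructor <;> nlinarith [hp.1.1, hp.1.2, ha]
  have iv2 : Integrable (fun p : ℝ × ℝ × ℝ × ℝ => p.2.1^2) (μ.prod (μ.prod (μ.prod μ))) := by
    apply int_bdd (m21.pow_const 2).aestronglyMeasurable (C := 4*a^2)
    filter_upwards [hs4] with p hp
    rw [abs_le]; constructor <;> nlinarith [hp.2.1.1, hp.2.1.2, ha]
  have iw2 : Integrable (fun p : ℝ × ℝ × ℝ × ℝ => (p.2.2.1 * p.2.2.2 / (p.2.2.1 + p.2.2.2))^2)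
      (μ.prod (μ.prod (μ.prod μ))) := by
    apply int_bdd (mw.pow_const 2).aestronglyMeasurable (C := a^2)
    filter_upwards [hs4] with p hp
    have := P1 ha hp.2.2.1 hp.2.2.2
    rw [abs_le]; constructor <;> nlinarith [this.1, this.2, ha]
  have iuv : Integrable (fun p : ℝ × ℝ × ℝ × ℝ => p.1 * p.2.1) (μ.prod (μ.prod (μ.prod μ))) := by
    apply int_bdd (measurable_fst.mul m21).aestronglyMeasurable (C := 4*a^2)
    filter_upwards [hs4] with p hp
    simp only [Pi.mul_apply]; rw [abs_le]; constructor <;> nlinarith [hp.1.1, hp.1.2, hp.2.1.1, hp.2.1.2, ha]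
  have iuw : Integrable (fun p : ℝ × ℝ × ℝ × ℝ => p.1 * (p.2.2.1 * p.2.2.2 / (p.2.2.1 + p.2.2.2)))
      (μ.prod (μ.prod (μ.prod μ))) := by
    apply int_bdd (measurable_fst.mul mw).aestronglyMeasurable (C := 2*a^2)
    filter_upwards [hs4] with p hp
    exact sqb _ _ hp.1 (P1 ha hp.2.2.1 hp.2.2.2)
  have ivw : Integrable (fun p : ℝ × ℝ × ℝ × ℝ => p.2.1 * (p.2.2.1 * p.2.2.2 / (p.2.2.1 + p.2.2.2)))
      (μ.prod (μ.prod (μ.prod μ))) := by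
    apply int_bdd (m21.mul mw).aestronglyMeasurable (C := 2*a^2)
    filter_upwards [hs4] with p hp
    exact sqb _ _ hp.2.1 (P1 ha hp.2.2.1 hp.2.2.2)
  rw [integral_map (f := fun x : ℝ => x^2) F_meas.aemeasurable
    (measurable_id.pow_const 2).aestronglyMeasurable]
  rw [intg_sq_add3 (fun p : ℝ × ℝ × ℝ × ℝ => p.1) (fun p : ℝ × ℝ × ℝ × ℝ => p.2.1)
    (fun p : ℝ × ℝ × ℝ × ℝ => p.2.2.1 * p.2.2.2 / (p.2.2.1 + p.2.2.2)) iu2 iv2 iw2 iuv iuw ivw]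
  -- marginal values
  have t1 : ∫ p : ℝ × ℝ × ℝ × ℝ, p.1^2 ∂(μ.prod (μ.prod (μ.prod μ))) = ∫ x, x^2 ∂μ :=
    int_fst μ _ (fun x => x^2)
  have t2 : ∫ p : ℝ × ℝ × ℝ × ℝ, p.2.1^2 ∂(μ.prod (μ.prod (μ.prod μ))) = ∫ x, x^2 ∂μ := by
    rw [int_snd μ _ (fun y : ℝ × ℝ × ℝ => y.1^2)]
    exact int_fst μ _ (fun x => x^2)
  have t3 : ∫ p : ℝ × ℝ × ℝ × ℝ, (p.2.2.1 * p.2.2.2 / (p.2.2.1 + p.2.2.2))^2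
      ∂(μ.prod (μ.prod (μ.prod μ)))
      = ∫ q : ℝ × ℝ, (q.1 * q.2 / (q.1 + q.2))^2 ∂(μ.prod μ) := by
    rw [int_snd μ _ (fun y : ℝ × ℝ × ℝ => (y.2.1 * y.2.2 / (y.2.1 + y.2.2))^2)]
    exact int_snd μ _ (fun q : ℝ × ℝ => (q.1 * q.2 / (q.1 + q.2))^2)
  have t4 : ∫ p : ℝ × ℝ × ℝ × ℝ, p.1 * p.2.1 ∂(μ.prod (μ.prod (μ.prod μ)))
      = (∫ x, x ∂μ) * (∫ x, x ∂μ) := by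
    have := MeasureTheory.integral_prod_mul (μ := μ) (ν := μ.prod (μ.prod μ))
      (fun x : ℝ => x) (fun y : ℝ × ℝ × ℝ => y.1)
    rw [int_fst μ _ (fun x : ℝ => x)] at this
    exact this
  have t5 : ∫ p : ℝ × ℝ × ℝ × ℝ, p.1 * (p.2.2.1 * p.2.2.2 / (p.2.2.1 + p.2.2.2))
      ∂(μ.prod (μ.prod (μ.prod μ)))
      = (∫ x, x ∂μ) * (∫ q : ℝ × ℝ, q.1 * q.2 / (q.1 + q.2) ∂(μ.prod μ)) := by
    have := MeasureTheory.integral_prod_mul (μ := μ) (ν := μ.prod (μ.prod μ))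
      (fun x : ℝ => x) (fun y : ℝ × ℝ × ℝ => y.2.1 * y.2.2 / (y.2.1 + y.2.2))
    rw [int_snd μ _ (fun q : ℝ × ℝ => q.1 * q.2 / (q.1 + q.2))] at this
    exact this
  have t6 : ∫ p : ℝ × ℝ × ℝ × ℝ, p.2.1 * (p.2.2.1 * p.2.2.2 / (p.2.2.1 + p.2.2.2))
      ∂(μ.prod (μ.prod (μ.prod μ)))
      = (∫ x, x ∂μ) * (∫ q : ℝ × ℝ, q.1 * q.2 / (q.1 + q.2) ∂(μ.prod μ)) := by
    rw [int_snd μ _ (fun y : ℝ × ℝ × ℝ => y.1 * (y.2.1 * y.2.2 / (y.2.1 + y.2.2)))]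
    have := MeasureTheory.integral_prod_mul (μ := μ) (ν := μ.prod μ)
      (fun x : ℝ => x) (fun q : ℝ × ℝ => q.1 * q.2 / (q.1 + q.2))
    exact this
  rw [t1, t2, t3, t4, t5, t6]; ring

lemma supp_step (ha : 0 < a) (hsupp : ∀ᵐ x ∂μ, x ∈ Icc a (2*a)) :
    ∀ᵐ x ∂(Measure.map (fun p : ℝ × ℝ × ℝ × ℝ => p.1 + p.2.1 + p.2.2.1 * p.2.2.2 / (p.2.2.1 + p.2.2.2))
        (μ.prod (μ.prod (μ.prod μ)))),
      x ∈ Icc ((5/2)*a) (2*((5/2)*a)) := by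
  rw [MeasureTheory.ae_map_iff (p := fun x => x ∈ Icc ((5/2)*a) (2*((5/2)*a))) F_meas.aemeasurable measurableSet_Icc]
  filter_upwards [supp4 ha hsupp] with p hp
  have hrf := P1 ha hp.2.2.1 hp.2.2.2
  constructor
  · have := hp.1.1; have := hp.2.1.1; have := hrf.1; linarith
  · have := hp.1.2; have := hp.2.1.2; have := hrf.2; linarith

lemma step_mean (ha : 0 < a) (hsupp : ∀ᵐ x ∂μ, x ∈ Icc a (2*a)) :
    (5/2) * (∫ x, x ∂μ) - ((∫ x, x^2 ∂μ) - (∫ x, x ∂μ)^2)/(4*a)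
      ≤ ∫ x, x ∂(Measure.map (fun p : ℝ × ℝ × ℝ × ℝ => p.1 + p.2.1 + p.2.2.1 * p.2.2.2 / (p.2.2.1 + p.2.2.2))
        (μ.prod (μ.prod (μ.prod μ)))) := by
  rw [mean_eq ha hsupp]
  have := I_lb ha hsupp
  linarith

lemma step_var (ha : 0 < a) (hsupp : ∀ᵐ x ∂μ, x ∈ Icc a (2*a)) :
    (∫ x, x^2 ∂(Measure.map (fun p : ℝ × ℝ × ℝ × ℝ => p.1 + p.2.1 + p.2.2.1 * p.2.2.2 / (p.2.2.1 + p.2.2.2))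
        (μ.prod (μ.prod (μ.prod μ)))))
      - (∫ x, x ∂(Measure.map (fun p : ℝ × ℝ × ℝ × ℝ => p.1 + p.2.1 + p.2.2.1 * p.2.2.2 / (p.2.2.1 + p.2.2.2))
        (μ.prod (μ.prod (μ.prod μ)))))^2
      ≤ (226/81) * ((∫ x, x^2 ∂μ) - (∫ x, x ∂μ)^2) := by
  rw [mean_eq ha hsupp, sq_eq ha hsupp]
  have := JI_bound ha hsupp
  nlinarith [this]

lemma base_supp : ∀ᵐ x ∂(mu (fun t s => t * s / (t + s)) 0), x ∈ Icc (1:ℝ) 2 := by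
  rw [ae_iff]
  have hS : MeasurableSet {x : ℝ | ¬ x ∈ Icc (1:ℝ) 2} := (measurableSet_Icc (a := (1:ℝ)) (b := 2)).compl
  rw [mu]
  rw [Measure.add_apply, Measure.smul_apply, Measure.smul_apply,
    Measure.dirac_apply' _ hS, Measure.dirac_apply' _ hS]
  have h1 : (1:ℝ) ∈ Icc (1:ℝ) 2 := by constructor <;> norm_num
  have h2 : (2:ℝ) ∈ Icc (1:ℝ) 2 := by constructor <;> norm_num
  rw [Set.indicator_of_notMem (by simpa using h1), Set.indicator_of_notMem (by simpa using h2)]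
  simp

lemma base_int : (∫ x, x ∂(mu (fun t s => t * s / (t + s)) 0)) = 3/2
    ∧ (∫ x, x^2 ∂(mu (fun t s => t * s / (t + s)) 0)) = 5/2 := by
  have hi : ∀ g : ℝ → ℝ, Measurable g →
      ∫ x, g x ∂(mu (fun t s => t * s / (t + s)) 0) = (1/2) * g 1 + (1/2) * g 2 := by
    intro g hg
    rw [mu, integral_add_measure, integral_smul_measure, integral_smul_measure,
      integral_dirac, integral_dirac]
    · norm_num
    · have : Integrable g (Measure.dirac (1:ℝ)) := by
        refine (integrable_const (g 1)).congr ?_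
        rw [Filter.EventuallyEq, MeasureTheory.ae_dirac_eq]
        simp
      exact this.smul_measure (by norm_num)
    · have : Integrable g (Measure.dirac (2:ℝ)) := by
        refine (integrable_const (g 2)).congr ?_
        rw [Filter.EventuallyEq, MeasureTheory.ae_dirac_eq]
        simp
      exact this.smul_measure (by norm_num)
  constructor
  · rw [hi (fun x => x) measurable_id]; norm_num
  · rw [hi (fun x => x^2) (measurable_id.pow_const 2)]; norm_num

lemma main_inv (n : ℕ) :
    (∀ᵐ x ∂(mu (fun t s => t * s / (t + s)) n), x ∈ Icc ((5/2:ℝ)^n) (2*(5/2:ℝ)^n))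
    ∧ ((5/2:ℝ)^n * (1.43 + (1/20) * (904/2025:ℝ)^n) ≤ ∫ x, x ∂(mu (fun t s => t * s / (t + s)) n))
    ∧ ((∫ x, x^2 ∂(mu (fun t s => t * s / (t + s)) n))
        - (∫ x, x ∂(mu (fun t s => t * s / (t + s)) n))^2 ≤ (1/4) * (226/81:ℝ)^n) := by
  induction n with
  | zero =>
      obtain ⟨hE, hM⟩ := base_int
      refine ⟨by simpa using base_supp, ?_, ?_⟩
      · rw [hE]; norm_num
      · rw [hE, hM]; norm_num
  | succ n ih =>
      obtain ⟨hsupp, hEn, hVn⟩ := ih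
      haveI := mu_prob n
      set μ := mu (fun t s => t * s / (t + s)) n with hμdef
      have ha : (0:ℝ) < (5/2:ℝ)^n := by positivity
      have hmu1 : mu (fun t s => t * s / (t + s)) (n+1)
          = Measure.map (fun p : ℝ × ℝ × ℝ × ℝ => p.1 + p.2.1 + p.2.2.1 * p.2.2.2 / (p.2.2.1 + p.2.2.2))
            (μ.prod (μ.prod (μ.prod μ))) := rfl
      have hsupp' := supp_step ha hsupp
      have hmean := step_mean ha hsupp
      have hvar := step_var ha hsupp
      set A := (5/2:ℝ)^n with hA
      set R := (904/2025:ℝ)^n with hR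
      set B := (226/81:ℝ)^n with hB
      have hApos : 0 < A := ha
      have hRpos : 0 < R := by positivity
      have hBA : B = R * A^2 := by
        have h25 : ((5/2:ℝ)^n)^2 = ((25/4:ℝ))^n := by
          rw [← pow_mul, mul_comm, pow_mul]; norm_num
        rw [hB, hR, hA, h25, ← mul_pow]; norm_num
      set E := ∫ x, x ∂μ
      set M := ∫ x, x^2 ∂μ
      set E' := ∫ x, x ∂(Measure.map (fun p : ℝ × ℝ × ℝ × ℝ => p.1 + p.2.1 + p.2.2.1 * p.2.2.2 / (p.2.2.1 + p.2.2.2))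
            (μ.prod (μ.prod (μ.prod μ))))
      set M' := ∫ x, x^2 ∂(Measure.map (fun p : ℝ × ℝ × ℝ × ℝ => p.1 + p.2.1 + p.2.2.1 * p.2.2.2 / (p.2.2.1 + p.2.2.2))
            (μ.prod (μ.prod (μ.prod μ))))
      refine ⟨?_, ?_, ?_⟩
      · rw [hmu1]
        have e1 : (5/2:ℝ)^(n+1) = (5/2) * A := by rw [hA, pow_succ]; ring
        rw [e1]
        exact hsupp'
      · rw [hmu1]
        have hdiv : (M - E^2)/(4*A) ≤ (R*A)/16 := by
          rw [div_le_div_iff₀ (by positivity) (by norm_num)]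
          have h1 : M - E^2 ≤ (1/4) * (R * A^2) := by rw [← hBA]; exact hVn
          nlinarith
        have e1 : (5/2:ℝ)^(n+1) = (5/2) * A := by rw [hA, pow_succ]; ring
        have e2 : (904/2025:ℝ)^(n+1) = (904/2025) * R := by rw [hR, pow_succ]; ring
        rw [e1, e2]
        have hE5 : (5/2) * A * (1.43 + (1/20) * ((904/2025) * R)) + (R*A)/16
            ≤ (5/2) * (A * (1.43 + (1/20) * R)) := by
          nlinarith [mul_pos hRpos hApos]
        have h3 : (5/2) * (A * (1.43 + (1/20) * R)) ≤ (5/2) * E := by nlinarith [hEn]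
        linarith [hmean, hdiv, hE5, h3]
      · rw [hmu1]
        have e3 : (1/4:ℝ) * (226/81:ℝ)^(n+1) = (226/81) * ((1/4) * B) := by rw [hB, pow_succ]; ring
        rw [e3]
        calc M' - E'^2 ≤ (226/81) * (M - E^2) := hvar
          _ ≤ (226/81) * ((1/4) * B) := by nlinarith [hVn]

theorem stmt18 (n : ℕ) :
    (1.43 : ℝ) * (5 / 2) ^ n ≤ En (fun t s => t * s / (t + s)) n := by
  obtain ⟨-, hE, -⟩ := main_inv n
  have h1 : (0:ℝ) < (5/2:ℝ)^n := by positivity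
  have h2 : (0:ℝ) ≤ (904/2025:ℝ)^n := by positivity
  rw [En]
  nlinarith [hE]
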